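/- Let Y = (1/q)Z be an n×n rational orthogonal matrix, where q is a positive integer and Z is an integer matrix with gcd of its nonzero entries equal to 1. If q_1 | q_2 | ... | q_n are the diagonal elements of the Smith normal form of Z, then q_i · q_{n-i+1} = q² for all i = 1,...,n. -/

import Mathlib

open Matrix


lemma card_ker_mul (m a : ℕ) (hm : m ≠ 0) :
    Nat.card {y : ZMod m // (a : ZMod m) * y = 0} = Nat.gcd a m := by
  haveI : NeZero m := ⟨hm⟩
  set f : ZMod m →+ ZMod m := AddMonoidHom.mulLeft (a : ZMod m) with hf
  have hker : Nat.card {y : ZMod m // (a : ZMod m) * y = 0}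
      = Nat.card (AddMonoidHom.ker f) := rfl
  have hrange : AddMonoidHom.range f = AddSubgroup.zmultiples (a : ZMod m) := by
    ext y
    simp only [AddMonoidHom.mem_range, AddSubgroup.mem_zmultiples_iff]
    constructor
    · rintro ⟨x, rfl⟩
      refine ⟨(x.val : ℤ), ?_⟩
      rw [zsmul_eq_mul]
      push_cast
      rw [ZMod.natCast_val, ZMod.cast_id, mul_comm]
      rfl
    · rintro ⟨k, rfl⟩
      exact ⟨(k : ZMod m), by rw [zsmul_eq_mul, mul_comm]; rfl⟩
  have hcard : Nat.card (ZMod m) = Nat.card (ZMod m ⧸ AddMonoidHom.ker f) * Nat.card (AddMonoidHom.ker f) :=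
    AddSubgroup.card_eq_card_quotient_mul_card_addSubgroup _
  have hquot : Nat.card (ZMod m ⧸ AddMonoidHom.ker f) = Nat.card (AddMonoidHom.range f) :=
    Nat.card_congr (QuotientAddGroup.quotientKerEquivRange f).toEquiv
  have hzm : Nat.card (AddMonoidHom.range f) = m / m.gcd a := by
    rw [hrange, Nat.card_zmultiples, ZMod.addOrderOf_coe a hm]
  have hcardZ : Nat.card (ZMod m) = m := Nat.card_zmod m
  have hgpos : 0 < m.gcd a := Nat.gcd_pos_of_pos_left a (Nat.pos_of_ne_zero hm)
  have hdvd : m.gcd a ∣ m := Nat.gcd_dvd_left m a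
  rw [hker]
  rw [hcardZ, hquot, hzm] at hcard
  have h2 : m / m.gcd a * Nat.card (AddMonoidHom.ker f) = m / m.gcd a * m.gcd a := by
    rw [← hcard, Nat.div_mul_cancel hdvd]
  have hqpos : 0 < m / m.gcd a := Nat.div_pos (Nat.le_of_dvd (Nat.pos_of_ne_zero hm) hdvd) hgpos
  have := Nat.eq_of_mul_eq_mul_left hqpos h2
  rw [this, Nat.gcd_comm]

lemma card_ker_equiv {n : ℕ} {R : Type*} [CommRing R] [Fintype R]
    (A B U V : Matrix (Fin n) (Fin n) R) (hU : IsUnit U.det) (hV : IsUnit V.det)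
    (hABV : A = U * B * V) :
    Nat.card {x : Fin n → R // A.mulVec x = 0} = Nat.card {x : Fin n → R // B.mulVec x = 0} := by
  have hVV : V * V⁻¹ = 1 := mul_nonsing_inv V hV
  have hVV' : V⁻¹ * V = 1 := nonsing_inv_mul V hV
  have hfwd : ∀ x : Fin n → R, A.mulVec x = 0 → B.mulVec (V.mulVec x) = 0 := by
    intro x hx
    have h1 : U⁻¹.mulVec (A.mulVec x) = 0 := by rw [hx, mulVec_zero]
    rw [hABV] at h1
    rw [show (U * B * V).mulVec x = U.mulVec (B.mulVec (V.mulVec x)) by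
      rw [mulVec_mulVec, mulVec_mulVec, Matrix.mul_assoc]] at h1
    rw [mulVec_mulVec, nonsing_inv_mul U hU, one_mulVec] at h1
    exact h1
  have hbwd : ∀ y : Fin n → R, B.mulVec y = 0 → A.mulVec (Matrix.mulVec V⁻¹ y) = 0 := by
    intro y hy
    rw [hABV, mulVec_mulVec]
    have : U * B * V * V⁻¹ = U * B := by
      rw [Matrix.mul_assoc (U * B), hVV, Matrix.mul_one]
    rw [this, ← mulVec_mulVec, hy, mulVec_zero]
  refine Nat.card_congr
    { toFun := fun x => ⟨V.mulVec x.1, hfwd x.1 x.2⟩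
      invFun := fun y => ⟨Matrix.mulVec V⁻¹ y.1, hbwd y.1 y.2⟩
      left_inv := ?_
      right_inv := ?_ }
  · rintro ⟨x, hx⟩
    ext1
    simp only [mulVec_mulVec, hVV', one_mulVec]
  · rintro ⟨y, hy⟩
    ext1
    simp only [mulVec_mulVec, hVV, one_mulVec]

lemma card_ker_diagonal {n : ℕ} {R : Type*} [CommRing R] [Fintype R] (w : Fin n → R) :
    Nat.card {x : Fin n → R // (diagonal w).mulVec x = 0}
      = ∏ i, Nat.card {y : R // w i * y = 0} := by
  rw [← Nat.card_pi]
  refine Nat.card_congr ?_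
  refine (Equiv.subtypeEquivRight (fun x => ?_)).trans (Equiv.subtypePiEquivPi (p := fun i y => w i * y = 0))
  constructor
  · intro h i
    have := congrFun h i
    rwa [mulVec_diagonal] at this
  · intro h
    funext i
    rw [mulVec_diagonal]
    exact h i

lemma all_eq_of_prod_eq {k : ℕ} (a : ℕ) (ha : 0 < a) (f : Fin k → ℕ)
    (hdvd : ∀ i, f i ∣ a) (hprod : ∏ i, f i = a ^ k) : ∀ i, f i = a := by
  intro i
  by_contra hne
  have hle : f i ≤ a := Nat.le_of_dvd ha (hdvd i)
  have hlt : f i < a := lt_of_le_of_ne hle hne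
  have hkpos : 0 < k := i.pos
  have h1 : ∏ j, f j = f i * ∏ j ∈ Finset.univ.erase i, f j :=
    (Finset.mul_prod_erase Finset.univ f (Finset.mem_univ i)).symm
  have h2 : ∏ j ∈ Finset.univ.erase i, f j ≤ a ^ (k - 1) := by
    calc ∏ j ∈ Finset.univ.erase i, f j ≤ ∏ _j ∈ Finset.univ.erase i, a :=
          Finset.prod_le_prod (fun _ _ => Nat.zero_le _) (fun j _ => Nat.le_of_dvd ha (hdvd j))
      _ = a ^ (k - 1) := by
          rw [Finset.prod_const, Finset.card_erase_of_mem (Finset.mem_univ i),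
            Finset.card_univ, Fintype.card_fin]
  have h3 : a ^ k < a ^ k := by
    calc a ^ k = f i * ∏ j ∈ Finset.univ.erase i, f j := by rw [← h1, hprod]
      _ < a * a ^ (k - 1) :=
          Nat.mul_lt_mul_of_lt_of_le hlt h2 (pow_pos ha _)
      _ = a ^ k := by
          rw [← pow_succ' a (k-1), Nat.sub_add_cancel hkpos]
  exact lt_irrefl _ h3

lemma chain_unique : ∀ (n : ℕ) (d e : Fin n → ℕ), (∀ i, 0 < d i) → (∀ i, 0 < e i) →
    (∀ i j, i ≤ j → d i ∣ d j) → (∀ i j, i ≤ j → e i ∣ e j) →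
    (∀ m : ℕ, 0 < m → ∏ i, Nat.gcd (d i) m = ∏ i, Nat.gcd (e i) m) → d = e := by
  intro n
  induction n with
  | zero => intro d e _ _ _ _ _; funext i; exact i.elim0
  | succ n ih =>
    have key : ∀ (u v : Fin (n+1) → ℕ), (∀ i, 0 < u i) →
        (∀ i j, i ≤ j → u i ∣ u j) →
        (∀ m : ℕ, 0 < m → ∏ i, Nat.gcd (u i) m = ∏ i, Nat.gcd (v i) m) →
        u 0 ∣ v 0 := by
      intro u v hu hcu h
      have h1 : ∏ i, Nat.gcd (u i) (u 0) = (u 0) ^ (n+1) := by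
        have : ∀ i : Fin (n+1), Nat.gcd (u i) (u 0) = u 0 := fun i =>
          Nat.gcd_eq_right (hcu 0 i (Fin.zero_le i))
        simp [this]
      have h2 : ∏ i, Nat.gcd (v i) (u 0) = (u 0) ^ (n+1) := by
        rw [← h (u 0) (hu 0), h1]
      have h3 : Nat.gcd (v 0) (u 0) = u 0 :=
        all_eq_of_prod_eq (u 0) (hu 0) _ (fun i => Nat.gcd_dvd_right _ _) h2 0
      have := Nat.gcd_dvd_left (v 0) (u 0)
      rwa [h3] at this
    intro d e hd he hcd hce hm
    have hhead : d 0 = e 0 :=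
      Nat.dvd_antisymm (key d e hd hcd hm) (key e d he hce (fun m hm' => (hm m hm').symm))
    have htail : Fin.tail d = Fin.tail e := by
      refine ih (Fin.tail d) (Fin.tail e) (fun i => hd _) (fun i => he _)
        (fun i j hij => hcd i.succ j.succ (Fin.succ_le_succ_iff.mpr hij))
        (fun i j hij => hce i.succ j.succ (Fin.succ_le_succ_iff.mpr hij)) ?_
      intro m hm'
      have h := hm m hm'
      rw [Fin.prod_univ_succ, Fin.prod_univ_succ, hhead] at h
      exact Nat.eq_of_mul_eq_mul_left (Nat.gcd_pos_of_pos_right _ hm') h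
    funext i
    refine Fin.cases ?_ (fun j => ?_) i
    · exact hhead
    · exact congrFun htail j


def gcdEntries {n : ℕ} (Z : Matrix (Fin n) (Fin n) ℤ) : ℤ :=
  Finset.univ.gcd (fun p : Fin n × Fin n => Z p.1 p.2)

theorem smith_diag_symmetry {n : ℕ} (Y : Matrix (Fin n) (Fin n) ℚ)
    (hY : Yᵀ * Y = 1) (q : ℕ) (hq : 0 < q)
    (Z : Matrix (Fin n) (Fin n) ℤ) (hZ : gcdEntries Z = 1)
    (hYZ : Y = ((1 : ℚ) / (q : ℚ)) • Z.map (fun a => (a : ℚ)))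
    (d : Fin n → ℤ) (hdpos : ∀ i, 0 < d i)
    (hchain : ∀ i j : Fin n, i ≤ j → d i ∣ d j)
    (P Q : Matrix (Fin n) (Fin n) ℤ) (hP : IsUnit P.det) (hQ : IsUnit Q.det)
    (hSNF : P * Z * Q = Matrix.diagonal d) :
    ∀ i : Fin n, d i * d i.rev = (q : ℤ) ^ 2 := by
  have hq0 : (q : ℚ) ≠ 0 := Nat.cast_ne_zero.mpr hq.ne'
  have hc0 : ((q : ℚ) ^ 2) ≠ 0 := pow_ne_zero 2 hq0
  set f : ℤ →+* ℚ := Int.castRingHom ℚ with hfdef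
  set Zq : Matrix (Fin n) (Fin n) ℚ := Z.map (fun a => (a : ℚ)) with hZq
  -- Step 1 : Zqᵀ * Zq = q² • 1 over ℚ
  have h1 : Zqᵀ * Zq = ((q : ℚ) ^ 2) • 1 := by
    have h := hY
    rw [hYZ] at h
    rw [transpose_smul, smul_mul_assoc, mul_smul_comm, smul_smul] at h
    have h2 := congrArg (fun M => ((q : ℚ) ^ 2) • M) h
    simp only [smul_smul] at h2
    have hs : (q : ℚ) ^ 2 * (1 / (q : ℚ) * (1 / (q : ℚ))) = 1 := by
      field_simp
    rw [hs, one_smul] at h2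
    exact h2
  -- Step 2 : Zq * Zqᵀ = q² • 1 over ℚ
  have h2 : Zq * Zqᵀ = ((q : ℚ) ^ 2) • 1 := by
    have ha : ((((q : ℚ) ^ 2)⁻¹) • Zqᵀ) * Zq = 1 := by
      rw [smul_mul_assoc, h1, smul_smul, inv_mul_cancel₀ hc0, one_smul]
    have hb := mul_eq_one_comm.mp ha
    rw [mul_smul_comm] at hb
    have h2b := congrArg (fun M => ((q : ℚ) ^ 2) • M) hb
    simp only [smul_smul, mul_inv_cancel₀ hc0, one_smul] at h2b
    exact h2b
  -- Step 3 : integer versions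
  have hsmul_map : (((q : ℤ) ^ 2) • (1 : Matrix (Fin n) (Fin n) ℤ)).map f = ((q : ℚ) ^ 2) • 1 := by
    ext i j
    simp only [Matrix.map_apply, Matrix.smul_apply, Matrix.one_apply, smul_eq_mul]
    by_cases h : i = j <;> simp [h]
  have hmapZ : ∀ (A B : Matrix (Fin n) (Fin n) ℤ),
      A.map (f : ℤ → ℚ) * B.map (f : ℤ → ℚ) = ((q : ℚ) ^ 2) • 1 →
        A * B = ((q : ℤ) ^ 2) • 1 := by
    intro A B h
    apply Matrix.map_injective (f := (f : ℤ → ℚ)) (fun a b hab => Int.cast_injective hab)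
    show (A * B).map (f : ℤ → ℚ)
      = (((q : ℤ) ^ 2) • (1 : Matrix (Fin n) (Fin n) ℤ)).map (f : ℤ → ℚ)
    rw [Matrix.map_mul, h, hsmul_map]
  have hZqmap : Zq = Z.map (f : ℤ → ℚ) := rfl
  have hZZt : Z * Zᵀ = ((q : ℤ) ^ 2) • 1 := by
    apply hmapZ
    rw [Matrix.transpose_map, ← hZqmap]
    exact h2
  have hZtZ : Zᵀ * Z = ((q : ℤ) ^ 2) • 1 := by
    apply hmapZ
    rw [Matrix.transpose_map, ← hZqmap]
    exact h1
  -- Step 4 : the matrix E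
  set E : Matrix (Fin n) (Fin n) ℤ := Q⁻¹ * Zᵀ * P⁻¹ with hE
  have hPP : P * P⁻¹ = 1 := mul_nonsing_inv P hP
  have hPP' : P⁻¹ * P = 1 := nonsing_inv_mul P hP
  have hQQ : Q * Q⁻¹ = 1 := mul_nonsing_inv Q hQ
  have hQQ' : Q⁻¹ * Q = 1 := nonsing_inv_mul Q hQ
  have hDE : Matrix.diagonal d * E = ((q : ℤ) ^ 2) • 1 := by
    rw [← hSNF, hE]
    calc P * Z * Q * (Q⁻¹ * Zᵀ * P⁻¹)
        = P * Z * (Q * Q⁻¹) * Zᵀ * P⁻¹ := by noncomm_ring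
      _ = P * (Z * Zᵀ) * P⁻¹ := by rw [hQQ]; noncomm_ring
      _ = ((q : ℤ) ^ 2) • 1 := by
          rw [hZZt, mul_smul_comm, smul_mul_assoc, Matrix.mul_one, hPP]
  have hED : E * Matrix.diagonal d = ((q : ℤ) ^ 2) • 1 := by
    rw [← hSNF, hE]
    calc Q⁻¹ * Zᵀ * P⁻¹ * (P * Z * Q)
        = Q⁻¹ * Zᵀ * (P⁻¹ * P) * Z * Q := by noncomm_ring
      _ = Q⁻¹ * (Zᵀ * Z) * Q := by rw [hPP']; noncomm_ring
      _ = ((q : ℤ) ^ 2) • 1 := by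
          rw [hZtZ, mul_smul_comm, smul_mul_assoc, Matrix.mul_one, hQQ']
  set e : Fin n → ℤ := fun i => E i i with he
  have hq2pos : (0 : ℤ) < (q : ℤ) ^ 2 := by positivity
  have hde : ∀ i, d i * e i = (q : ℤ) ^ 2 := by
    intro i
    have := congrFun (congrFun hDE i) i
    rwa [Matrix.diagonal_mul, Matrix.smul_apply, Matrix.one_apply_eq, smul_eq_mul,
      mul_one] at this
  have hEdiag : E = Matrix.diagonal e := by
    ext i j
    by_cases hij : i = j
    · subst hij; simp [Matrix.diagonal_apply_eq]; rfl
    · have := congrFun (congrFun hDE i) j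
      rw [Matrix.diagonal_mul, Matrix.smul_apply, Matrix.one_apply_ne hij, smul_eq_mul,
        mul_zero] at this
      have hz : E i j = 0 := by
        rcases mul_eq_zero.mp this with h | h
        · exact absurd h (hdpos i).ne'
        · exact h
      rw [hz, Matrix.diagonal_apply_ne _ hij]
  have hepos : ∀ i, 0 < e i := by
    intro i
    by_contra hle
    push_neg at hle
    have := hde i
    nlinarith [hdpos i]
  have hechain : ∀ i j : Fin n, i ≤ j → e j ∣ e i := by
    intro i j hij
    obtain ⟨t, ht⟩ := hchain i j hij
    have h1 : d i * e i = d i * (t * e j) := by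
      rw [hde i, ← hde j, ht]; ring
    have h2 : e i = t * e j := mul_left_cancel₀ (hdpos i).ne' h1
    exact ⟨t, by rw [h2]; ring⟩
  -- Step 5 : equivalence of diagonal d and diagonal e
  have hEsymm : Eᵀ = E := by rw [hEdiag, Matrix.diagonal_transpose]
  have hEform : Eᵀ = P⁻¹ᵀ * Z * Q⁻¹ᵀ := by
    rw [hE, Matrix.transpose_mul, Matrix.transpose_mul, Matrix.transpose_transpose,
      Matrix.mul_assoc]
  have hZform : Pᵀ * E * Qᵀ = Z := by
    rw [← hEsymm, hEform]
    calc Pᵀ * (P⁻¹ᵀ * Z * Q⁻¹ᵀ) * Qᵀ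
        = (P⁻¹ * P)ᵀ * Z * (Q * Q⁻¹)ᵀ := by
          rw [Matrix.transpose_mul, Matrix.transpose_mul]; noncomm_ring
      _ = Z := by rw [hPP', hQQ]; simp
  have hequiv : Matrix.diagonal d = (P * Pᵀ) * Matrix.diagonal e * (Qᵀ * Q) := by
    rw [← hSNF, ← hEdiag, ← hZform]; noncomm_ring
  have hUdet : IsUnit ((P * Pᵀ).det) := by
    rw [Matrix.det_mul, Matrix.det_transpose]; exact hP.mul hP
  have hVdet : IsUnit ((Qᵀ * Q).det) := by
    rw [Matrix.det_mul, Matrix.det_transpose]; exact hQ.mul hQ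
  -- Step 6 : the counting invariant
  have hinv : ∀ m : ℕ, 0 < m →
      ∏ i, Nat.gcd (d i).natAbs m = ∏ i, Nat.gcd (e i).natAbs m := by
    intro m hm
    haveI : NeZero m := ⟨hm.ne'⟩
    set g : ℤ →+* ZMod m := Int.castRingHom (ZMod m) with hg
    have hmapdiag : ∀ w : Fin n → ℤ,
        (Matrix.diagonal w).map (g : ℤ → ZMod m)
          = Matrix.diagonal (fun i => ((w i : ZMod m))) :=
      fun w => Matrix.diagonal_map (by simp)
    have hmapeq : (Matrix.diagonal d).map (g : ℤ → ZMod m)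
        = ((P * Pᵀ).map (g : ℤ → ZMod m)) * ((Matrix.diagonal e).map (g : ℤ → ZMod m))
          * ((Qᵀ * Q).map (g : ℤ → ZMod m)) := by
      rw [hequiv, Matrix.map_mul, Matrix.map_mul]
    have hU' : IsUnit (((P * Pᵀ).map (g : ℤ → ZMod m)).det) := by
      rw [← RingHom.mapMatrix_apply, ← RingHom.map_det]
      exact hUdet.map g
    have hV' : IsUnit (((Qᵀ * Q).map (g : ℤ → ZMod m)).det) := by
      rw [← RingHom.mapMatrix_apply, ← RingHom.map_det]
      exact hVdet.map g
    have hcards := card_ker_equiv _ _ _ _ hU' hV' hmapeq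
    rw [hmapdiag d, hmapdiag e, card_ker_diagonal, card_ker_diagonal] at hcards
    have hcast : ∀ x : ℤ, 0 < x → ((x : ZMod m)) = (((x.natAbs : ℕ) : ZMod m)) := by
      intro x hx
      have hpc : (((x.natAbs : ℤ) : ZMod m)) = (((x.natAbs : ℕ) : ZMod m)) :=
        Int.cast_natCast x.natAbs
      rw [Int.natAbs_of_nonneg hx.le] at hpc
      exact hpc
    calc ∏ i, Nat.gcd (d i).natAbs m
        = ∏ i, Nat.card {y : ZMod m // ((d i : ZMod m)) * y = 0} := by
          refine Finset.prod_congr rfl (fun i _ => ?_)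
          rw [hcast (d i) (hdpos i), card_ker_mul _ _ hm.ne']
      _ = ∏ i, Nat.card {y : ZMod m // ((e i : ZMod m)) * y = 0} := hcards
      _ = ∏ i, Nat.gcd (e i).natAbs m := by
          refine Finset.prod_congr rfl (fun i _ => ?_)
          rw [hcast (e i) (hepos i), card_ker_mul _ _ hm.ne']
  -- Step 7 : conclude via uniqueness of chains
  set dn : Fin n → ℕ := fun i => (d i).natAbs with hdn
  set en : Fin n → ℕ := fun i => (e i.rev).natAbs with hen
  have hmain : dn = en := by
    refine chain_unique n dn en (fun i => ?_) (fun i => ?_) (fun i j hij => ?_)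
      (fun i j hij => ?_) (fun m hm => ?_)
    · have := hdpos i
      simp only [hdn]
      omega
    · have := hepos i.rev
      simp only [hen]
      omega
    · exact Int.natAbs_dvd_natAbs.mpr (hchain i j hij)
    · exact Int.natAbs_dvd_natAbs.mpr (hechain j.rev i.rev (Fin.rev_le_rev.mpr hij))
    · calc ∏ i, Nat.gcd (dn i) m
          = ∏ i, Nat.gcd (e i).natAbs m := hinv m hm
        _ = ∏ i, Nat.gcd (en i) m :=
            (Equiv.prod_comp Fin.revPerm (fun i => Nat.gcd (e i).natAbs m)).symm
  intro i
  have h := congrFun hmain i.rev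
  simp only [hdn, hen, Fin.rev_rev] at h
  have hd' := (hdpos i.rev).le
  have he' := (hepos i).le
  have hde' : d i.rev = e i := by
    rw [← Int.natAbs_of_nonneg hd', ← Int.natAbs_of_nonneg he', h]
  rw [hde']
  exact hde i
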